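/- For every real r > 5 there exist a real c > 0 and n₀ ∈ ℕ such that for all n ≥ n₀ the following holds. Let h_1,…,h_{n−1} and s_1,…,s_{n−1} be real numbers with 0 < h_k ≤ 1, 0 < s_k ≤ 1, and h_k·s_k < 1 for every k ∈ {1,…,n−1}, and suppose that for every such k: (i) h_k ≥ 1 − (k+2)/(n(r−1)); (ii) s_k ≥ 1/n; (iii) if k ≤ n/2 then s_k ≥ 1 − 256r/((r−5)(r−1)·n); and (iv) if k ≤ n − √(n·log n) then s_k ≥ 1 − 64r/((r−5)(r−1)·log n), where log is the natural logarithm. Define λ_k = h_k·s_k/(1 − h_k·s_k). Then 1/(1 + Σ_{k=1}^{n−1} Π_{j=1}^{k} (1/λ_j)) ≥ 1 − c/n. -/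

import Mathlib

set_option maxHeartbeats 1000000

/-- Absorption-at-the-top probability of the birth–death chain built from the urchin
graph bounds: starting from state 1, the probability
`1/(1 + Σ_{k=1}^{n-1} Π_{j=1}^{k} 1/λ_j)` (with `λ_j = h_j s_j/(1 - h_j s_j)`, so
`1/λ_j = (1 - h_j s_j)/(h_j s_j)`) is at least `1 - c/n`. -/
theorem birth_death_lower_bound (r : ℝ) (hr : 5 < r) :
    ∃ c : ℝ, 0 < c ∧ ∃ n₀ : ℕ, ∀ n : ℕ, n₀ ≤ n →
      ∀ h s : ℕ → ℝ,
      (∀ k, 1 ≤ k → k ≤ n - 1 →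
        0 < h k ∧ h k ≤ 1 ∧ 0 < s k ∧ s k ≤ 1 ∧ h k * s k < 1) →
      (∀ k, 1 ≤ k → k ≤ n - 1 → h k ≥ 1 - ((k : ℝ) + 2) / ((n : ℝ) * (r - 1))) →
      (∀ k, 1 ≤ k → k ≤ n - 1 → s k ≥ 1 / (n : ℝ)) →
      (∀ k, 1 ≤ k → k ≤ n - 1 → (k : ℝ) ≤ (n : ℝ) / 2 →
        s k ≥ 1 - 256 * r / ((r - 5) * (r - 1) * n)) →
      (∀ k, 1 ≤ k → k ≤ n - 1 → (k : ℝ) ≤ (n : ℝ) - Real.sqrt ((n : ℝ) * Real.log n) →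
        s k ≥ 1 - 64 * r / ((r - 5) * (r - 1) * Real.log n)) →
      1 / (1 + ∑ k ∈ Finset.Icc 1 (n - 1), ∏ j ∈ Finset.Icc 1 k,
            (1 - h j * s j) / (h j * s j))
        ≥ 1 - c / n := by
  have hr5 : (0:ℝ) < r - 5 := by linarith
  have hr1 : (4:ℝ) < r - 1 := by linarith
  have hr1' : (0:ℝ) < r - 1 := by linarith
  have hr0 : (0:ℝ) < r := by linarith
  set A : ℝ := 256 * r / ((r - 5) * (r - 1)) with hAdef
  set D : ℝ := 64 * r / ((r - 5) * (r - 1)) with hDdef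
  set C₁ : ℝ := 3 / (r - 1) + A with hC₁def
  have hP : (0:ℝ) < (r - 5) * (r - 1) := mul_pos hr5 hr1'
  have hApos : 0 < A := div_pos (by linarith) hP
  have hDpos : 0 < D := div_pos (by linarith) hP
  have hC₁pos : 0 < C₁ := by
    rw [hC₁def]
    exact add_pos (div_pos (by norm_num) hr1') hApos
  clear_value A D C₁
  refine ⟨8 * C₁ + 1, by linarith, max (max (4096^4) ⌈Real.exp (32 * D)⌉₊) ⌈2 * C₁⌉₊, ?_⟩
  intro n hn h s hyp0 hyph hyps1 hypsA hypsD
  -- basic size facts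
  have hnX : 4096^4 ≤ n := le_trans (le_trans (le_max_left _ _) (le_max_left _ _)) hn
  have hnY : ⌈Real.exp (32 * D)⌉₊ ≤ n := le_trans (le_trans (le_max_right _ _) (le_max_left _ _)) hn
  have hnZ : ⌈2 * C₁⌉₊ ≤ n := le_trans (le_max_right _ _) hn
  set N : ℝ := (n : ℝ) with hNdef
  have hnX' : 281474976710656 ≤ n := by
    have : 4096^4 = 281474976710656 := by norm_num
    omega
  have hN4096 : (281474976710656:ℝ) ≤ N := by exact_mod_cast Nat.cast_le.mpr hnX'
  have hNpos : 0 < N := by linarith only [hN4096]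
  have hN8 : (8:ℝ) ≤ N := by linarith only [hN4096]
  set L : ℝ := Real.log N with hLdef
  have hL32D : 32 * D ≤ L := by
    have h1 : Real.exp (32 * D) ≤ N := le_trans (Nat.le_ceil _) (Nat.cast_le.mpr hnY)
    have h2 := Real.log_le_log (Real.exp_pos _) h1
    rwa [Real.log_exp] at h2
  have hL1 : 1 ≤ L := by
    have h1 : Real.exp 1 ≤ N := by
      have := Real.exp_one_lt_d9
      linarith only [this, hN4096]
    have h2 := Real.log_le_log (Real.exp_pos _) h1
    rwa [Real.log_exp] at h2
  have hLpos : 0 < L := by linarith only [hL1]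
  have hNC₁ : 2 * C₁ ≤ N := le_trans (Nat.le_ceil _) (Nat.cast_le.mpr hnZ)
  -- the auxiliary quantity u = N^(1/4)
  set u : ℝ := Real.sqrt (Real.sqrt N) with hudef
  have hsqrtN_nonneg : 0 ≤ Real.sqrt N := Real.sqrt_nonneg N
  have hu_nonneg : 0 ≤ u := Real.sqrt_nonneg _
  have hu2 : u^2 = Real.sqrt N := Real.sq_sqrt hsqrtN_nonneg
  have hu4 : u^4 = N := by
    have h1 : u^4 = (u^2)^2 := by ring
    rw [h1, hu2, Real.sq_sqrt hNpos.le]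
  have hu4096 : (4096:ℝ) ≤ u := by
    rw [hudef, Real.le_sqrt (by norm_num) hsqrtN_nonneg,
      Real.le_sqrt (by positivity) hNpos.le]
    norm_num
    linarith only [hN4096]
  have hu0 : (0:ℝ) < u := by linarith only [hu4096]
  have hsu : (64:ℝ) ≤ Real.sqrt u := by
    rw [Real.le_sqrt (by norm_num) hu0.le]
    norm_num
    linarith only [hu4096]
  have hsusu : Real.sqrt u * Real.sqrt u = u := Real.mul_self_sqrt hu0.le
  have hLu : L ≤ 4 * u := by
    have h1 : L = 4 * Real.log u := by
      rw [hLdef, ← hu4, Real.log_pow]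
      push_cast; ring
    have h2 : Real.log u ≤ u - 1 := Real.log_le_sub_one_of_pos hu0
    linarith only [h1, h2, hu0]
  have hLN : L ≤ N := by
    have := Real.log_le_sub_one_of_pos hNpos
    linarith only [this]
  -- W = sqrt(N log N)
  set W : ℝ := Real.sqrt (N * L) with hWdef
  have hW_nonneg : 0 ≤ W := Real.sqrt_nonneg _
  have hWN : W ≤ N := by
    rw [hWdef]
    calc Real.sqrt (N * L) ≤ Real.sqrt (N * N) :=
          Real.sqrt_le_sqrt (mul_le_mul_of_nonneg_left hLN hNpos.le)
      _ = N := Real.sqrt_mul_self hNpos.le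
  have hWu : W ≤ 2 * u^2 * Real.sqrt u := by
    have h1 : N * L ≤ (2 * u^2 * Real.sqrt u)^2 := by
      have h2 : (2 * u^2 * Real.sqrt u)^2 = 4 * u^4 * u := by
        rw [mul_pow, mul_pow, Real.sq_sqrt hu0.le]; ring
      rw [h2, ← hu4]
      have h5 := mul_le_mul_of_nonneg_left hLu (pow_nonneg hu0.le 4)
      linarith only [h5]
    calc W ≤ Real.sqrt ((2 * u^2 * Real.sqrt u)^2) := Real.sqrt_le_sqrt h1
      _ = 2 * u^2 * Real.sqrt u := Real.sqrt_sq (by positivity)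
  have hsuu : Real.sqrt u ≤ u := by
    have h1 : (1:ℝ) ≤ Real.sqrt u := by linarith only [hsu]
    have h2 : 1 * Real.sqrt u ≤ Real.sqrt u * Real.sqrt u :=
      mul_le_mul_of_nonneg_right h1 (Real.sqrt_nonneg u)
    rw [one_mul, hsusu] at h2
    exact h2
  have hWu3 : W ≤ 2 * u^3 := by
    have h1 := mul_le_mul_of_nonneg_left hsuu (by positivity : (0:ℝ) ≤ 2 * u^2)
    calc W ≤ 2 * u^2 * Real.sqrt u := hWu
      _ ≤ 2 * u^2 * u := h1
      _ = 2 * u^3 := by ring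
  have hWL : W * L ≤ u^4 / 8 := by
    have h1 : W * L ≤ (2 * u^2 * Real.sqrt u) * (4 * u) :=
      mul_le_mul hWu hLu (by linarith) (by positivity)
    have h2 : (64:ℝ) * Real.sqrt u ≤ u := by
      have := mul_le_mul_of_nonneg_right hsu (Real.sqrt_nonneg u)
      linarith only [this, hsusu]
    have h3 := mul_le_mul_of_nonneg_left h2 (by positivity : (0:ℝ) ≤ u^3/8)
    linarith only [h1, h3]
  -- the cut point m
  set m : ℕ := ⌊N - W⌋₊ with hmdef
  have hNW0 : 0 ≤ N - W := by linarith only [hWN]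
  have hm_le : (m:ℝ) ≤ N - W := Nat.floor_le hNW0
  have hm_gt : N - W - 1 < (m:ℝ) := by
    have := Nat.lt_floor_add_one (N - W)
    push_cast at this ⊢
    linarith only [this]
  set m' : ℕ := min m (n-1) with hm'def
  have hm'1 : m' ≤ n - 1 := min_le_right _ _
  have hm'm : m' ≤ m := min_le_left _ _
  have hn1 : 1 ≤ n := by omega
  have hNsub1 : ((n - 1 : ℕ) : ℝ) = N - 1 := by
    rw [hNdef]; push_cast [Nat.cast_sub hn1]; ring
  have hn2 : 1 ≤ n - 1 := by omega
  -- per-index bounds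
  have hhub : ∀ j, 1 ≤ j → j ≤ n - 1 → 1 - h j ≤ 9/32 ∧ 23/32 ≤ h j := by
    intro j h1 h2
    have hhb := hyph j h1 h2
    have hj : (j:ℝ) ≤ N - 1 := by
      rw [← hNsub1]; exact_mod_cast h2
    have hfrac : ((j:ℝ) + 2) / (N * (r-1)) ≤ 9/32 := by
      rw [div_le_iff₀ (by positivity)]
      have hint := mul_le_mul_of_nonneg_left (le_of_lt hr1) (by linarith only [hNpos] : (0:ℝ) ≤ 9/32 * N)
      linarith only [hj, hN8, hint]
    exact ⟨by linarith only [hhb, hfrac], by linarith only [hhb, hfrac]⟩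
  have hq_nonneg : ∀ j, 1 ≤ j → j ≤ n - 1 → 0 ≤ (1 - h j * s j) / (h j * s j) := by
    intro j h1 h2
    obtain ⟨hh0, hh1, hs0, hs1, hhs⟩ := hyp0 j h1 h2
    exact div_nonneg (by linarith only [hhs]) (by positivity)
  have key_half : ∀ j, 1 ≤ j → j ≤ n - 1 → (j:ℝ) ≤ N - W →
      (1 - h j * s j) / (h j * s j) ≤ 1/2 := by
    intro j h1 h2 h3
    obtain ⟨hh0, hh1, hs0, hs1, hhs⟩ := hyp0 j h1 h2
    obtain ⟨hhu, _⟩ := hhub j h1 h2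
    have hsb := hypsD j h1 h2 h3
    have hDL : 64 * r / ((r - 5) * (r - 1) * L) ≤ 1/32 := by
      have heq : 64 * r / ((r - 5) * (r - 1) * L) = D / L := by
        rw [hDdef, div_div]
      rw [heq, div_le_iff₀ hLpos]
      linarith only [hL32D]
    have hsu' : 1 - s j ≤ 1/32 := by linarith only [hsb, hDL]
    have hmul : 1 - h j * s j ≤ (1 - h j) + (1 - s j) := by
      have hx := mul_nonneg (by linarith only [hh1] : (0:ℝ) ≤ 1 - h j)
        (by linarith only [hs1] : (0:ℝ) ≤ 1 - s j)
      linarith only [hx]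
    have ht2 : (11:ℝ)/16 ≤ h j * s j := by linarith only [hmul, hhu, hsu']
    rw [div_le_iff₀ (by positivity)]
    linarith only [ht2, hmul, hhu, hsu']
  have key_2N : ∀ j, 1 ≤ j → j ≤ n - 1 → (1 - h j * s j) / (h j * s j) ≤ 2 * N := by
    intro j h1 h2
    obtain ⟨hh0, hh1, hs0, hs1, hhs⟩ := hyp0 j h1 h2
    obtain ⟨_, hhl⟩ := hhub j h1 h2
    have hsl := hyps1 j h1 h2
    have ht : 23/32 * (1/N) ≤ h j * s j :=
      mul_le_mul hhl hsl (by positivity) hh0.le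
    have h2N : 2 * N * (23/32 * (1/N)) = 23/16 := by field_simp; ring
    have hbig : (23:ℝ)/16 ≤ 2 * N * (h j * s j) := by
      have h5 := mul_le_mul_of_nonneg_left ht (by linarith only [hNpos] : (0:ℝ) ≤ 2*N)
      rw [h2N] at h5
      exact h5
    have hsp : 0 < h j * s j := mul_pos hh0 hs0
    rw [div_le_iff₀ (by positivity)]
    linarith only [hbig, hsp]
  have key_1 : (1 - h 1 * s 1) / (h 1 * s 1) ≤ 2 * C₁ / N := by
    obtain ⟨hh0, hh1, hs0, hs1, hhs⟩ := hyp0 1 le_rfl hn2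
    have hhb := hyph 1 le_rfl hn2
    have hsb := hypsA 1 le_rfl hn2 (by push_cast; linarith only [hN8])
    have hAN : 256 * r / ((r - 5) * (r - 1) * N) = A / N := by
      rw [hAdef, div_div]
    rw [hAN] at hsb
    have h3 : ((1:ℕ):ℝ) + 2 = 3 := by norm_num
    rw [ge_iff_le, h3] at hhb
    have hhb2 : 1 - h 1 ≤ 3 / (N*(r-1)) := by linarith only [hhb]
    have heq : (3:ℝ)/(N*(r-1)) = (3/(r-1))/N := by
      rw [div_div, mul_comm]
    rw [heq] at hhb2
    have hmul : 1 - h 1 * s 1 ≤ (1 - h 1) + (1 - s 1) := by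
      have hx := mul_nonneg (by linarith only [hh1] : (0:ℝ) ≤ 1 - h 1)
        (by linarith only [hs1] : (0:ℝ) ≤ 1 - s 1)
      linarith only [hx]
    have ht1 : 1 - h 1 * s 1 ≤ C₁ / N := by
      have hCeq : C₁ / N = (3 / (r-1)) / N + A / N := by rw [hC₁def]; ring
      rw [hCeq]
      linarith only [hmul, hhb2, hsb]
    have hCN : C₁ / N ≤ 1/2 := by
      rw [div_le_iff₀ hNpos]; linarith only [hNC₁]
    have ht2 : 1/2 ≤ h 1 * s 1 := by linarith only [ht1, hCN]
    rw [div_le_iff₀ (by positivity)]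
    have h4 : 2 * C₁ / N * (1/2) ≤ 2 * C₁ / N * (h 1 * s 1) :=
      mul_le_mul_of_nonneg_left ht2 (by positivity)
    have h5 : 2 * C₁ / N * (1/2) = C₁ / N := by ring
    linarith only [h4, h5, ht1]
  -- convert Icc 1 to Ioc 0 and split the sum
  have hIccIoc : ∀ x : ℕ, Finset.Icc 1 x = Finset.Ioc 0 x := by
    intro x; ext y; simp [Nat.lt_iff_add_one_le]
  rw [hIccIoc]
  have hsplit := Finset.sum_Ioc_consecutive (fun k => ∏ j ∈ Finset.Icc 1 k,
      (1 - h j * s j) / (h j * s j)) (Nat.zero_le m') hm'1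
  rw [← hsplit]
  set Q : ℕ → ℝ := fun j => (1 - h j * s j) / (h j * s j) with hQdef
  -- part 1
  have part1 : ∑ k ∈ Finset.Ioc 0 m', ∏ j ∈ Finset.Icc 1 k, Q j ≤ 4 * C₁ / N := by
    have hterm : ∀ k ∈ Finset.Ioc 0 m', ∏ j ∈ Finset.Icc 1 k, Q j ≤ (2 * C₁ / N) * (1/2)^(k-1) := by
      intro k hk
      rw [Finset.mem_Ioc] at hk
      obtain ⟨hk0, hkm⟩ := hk
      have hkn : k ≤ n - 1 := le_trans hkm hm'1
      have hIco : Finset.Icc 1 k = Finset.Ico 1 (k+1) := by rw [Finset.Ico_add_one_right_eq_Icc]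
      rw [hIco, Finset.prod_eq_prod_Ico_succ_bot (by omega : 1 < k+1) Q]
      have hrest : ∏ j ∈ Finset.Ico (1+1) (k+1), Q j ≤ (1/2:ℝ)^(k-1) := by
        have hpp := Finset.prod_le_prod (f := Q) (g := fun _ => (1/2:ℝ))
          (s := Finset.Ico (1+1) (k+1))
          (fun j hj => by
            rw [Finset.mem_Ico] at hj
            exact hq_nonneg j (by omega) (by omega))
          (fun j hj => by
            rw [Finset.mem_Ico] at hj
            refine key_half j (by omega) (by omega) ?_
            have hjm : (j:ℝ) ≤ (m:ℝ) := Nat.cast_le.mpr (by omega : j ≤ m)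
            linarith)
        rw [Finset.prod_const] at hpp
        have hcard : (Finset.Ico (1+1) (k+1)).card = k - 1 := by
          rw [Nat.card_Ico]; omega
        rwa [hcard] at hpp
      have hq1 : 0 ≤ Q 1 := hq_nonneg 1 le_rfl hn2
      calc Q 1 * ∏ j ∈ Finset.Ico (1+1) (k+1), Q j
          ≤ Q 1 * (1/2)^(k-1) := mul_le_mul_of_nonneg_left hrest hq1
        _ ≤ (2 * C₁ / N) * (1/2)^(k-1) :=
            mul_le_mul_of_nonneg_right key_1 (by positivity)
    calc ∑ k ∈ Finset.Ioc 0 m', ∏ j ∈ Finset.Icc 1 k, Q j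
        ≤ ∑ k ∈ Finset.Ioc 0 m', (2 * C₁ / N) * (1/2:ℝ)^(k-1) :=
          Finset.sum_le_sum hterm
      _ = (2 * C₁ / N) * ∑ k ∈ Finset.Ioc 0 m', (1/2:ℝ)^(k-1) := by
          rw [Finset.mul_sum]
      _ ≤ (2 * C₁ / N) * 2 := by
          refine mul_le_mul_of_nonneg_left ?_ (by positivity)
          have hIocIco : Finset.Ioc 0 m' = Finset.Ico 1 (m'+1) := by
            rw [Finset.Ico_add_one_right_eq_Icc, ← Finset.Icc_add_one_left_eq_Ioc, zero_add]
          rw [hIocIco, Finset.sum_Ico_eq_sum_range]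
          have hcg : ∀ i ∈ Finset.range (m'+1-1), (1/2:ℝ)^(1 + i - 1) = (1/2:ℝ)^i := by
            intro i _; congr 1; omega
          rw [Finset.sum_congr rfl hcg]
          have hgeom := geom_sum_eq (show (1/2:ℝ) ≠ 1 by norm_num) (m' + 1 - 1)
          rw [hgeom]
          have h1 : (0:ℝ) ≤ (1/2:ℝ)^(m' + 1 - 1) := by positivity
          rw [div_le_iff_of_neg (by norm_num : (1/2:ℝ) - 1 < 0)]
          linarith only [h1]
      _ = 4 * C₁ / N := by ring
  -- part 2
  have part2 : ∑ k ∈ Finset.Ioc m' (n-1), ∏ j ∈ Finset.Icc 1 k, Q j ≤ 1 / N := by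
    by_cases hmn : m < n - 1
    · have hm'eq : m' = m := min_eq_left (le_of_lt hmn)
      rw [hm'eq]
      set d : ℕ := n - 1 - m with hddef
      have hdR : (d:ℝ) ≤ W := by
        have hcast : (d:ℝ) = (N - 1) - m := by
          rw [hddef]
          push_cast [Nat.cast_sub (by omega : m ≤ n - 1), Nat.cast_sub hn1]
          ring
        rw [hcast]; linarith only [hm_gt]
      have hd_nonneg : (0:ℝ) ≤ (d:ℝ) := Nat.cast_nonneg d
      -- key exponential inequality
      have hkey : N^2 * (2*N)^d ≤ 2^m := by
        have hx : (0:ℝ) < N^2 * (2*N)^d := by positivity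
        have hy : (0:ℝ) < (2:ℝ)^m := by positivity
        rw [← Real.log_le_log_iff hx hy,
          Real.log_mul (by positivity) (by positivity), Real.log_pow, Real.log_pow,
          Real.log_mul (by norm_num : (2:ℝ) ≠ 0) (ne_of_gt hNpos), Real.log_pow, ← hLdef]
        push_cast
        have hlog2a : Real.log 2 ≤ 1 := by
          have := Real.log_two_lt_d9; linarith
        have hlog2b : (1:ℝ)/2 ≤ Real.log 2 := by
          have := Real.log_two_gt_d9; linarith
        have e1 : (d:ℝ) * (Real.log 2 + L) ≤ W * (1 + L) :=
          mul_le_mul hdR (by linarith) (by linarith) hW_nonneg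
        have e3 : (N - W - 1) * (1/2) ≤ (m:ℝ) * Real.log 2 :=
          mul_le_mul (le_of_lt hm_gt) hlog2b (by norm_num) (Nat.cast_nonneg m)
        have b1 : 4096 * u^3 ≤ u^4 := by
          have hx := mul_nonneg (by linarith only [hu4096] : (0:ℝ) ≤ u - 4096) (pow_pos hu0 3).le
          linarith only [hx]
        have b2 : u ≤ u^3 := by
          have hx := mul_nonneg (mul_nonneg hu0.le (by linarith only [hu4096] : (0:ℝ) ≤ u - 1))
            (by linarith only [hu0] : (0:ℝ) ≤ u + 1)
          linarith only [hx]
        have b3 : (1:ℝ) ≤ u := by linarith only [hu4096]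
        have hfin : 4*L + 3*W + 2*(W*L) + 1 ≤ N := by
          linarith only [hWL, hWu3, hLu, hu4.le, hu4.ge, b1, b2, b3]
        have hexp : W * (1 + L) = W + W*L := by ring
        linarith only [e1, e3, hexp, hfin]
      have hterm : ∀ k ∈ Finset.Ioc m (n-1), ∏ j ∈ Finset.Icc 1 k, Q j ≤ (1/2:ℝ)^m * (2*N)^d := by
        intro k hk
        rw [Finset.mem_Ioc] at hk
        obtain ⟨hkm, hkn⟩ := hk
        rw [hIccIoc, ← Finset.prod_Ioc_consecutive Q (Nat.zero_le m) (le_of_lt hkm)]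
        have hp1 : ∏ j ∈ Finset.Ioc 0 m, Q j ≤ (1/2:ℝ)^m := by
          have hpp := Finset.prod_le_prod (f := Q) (g := fun _ => (1/2:ℝ))
            (s := Finset.Ioc 0 m)
            (fun j hj => by
              rw [Finset.mem_Ioc] at hj
              exact hq_nonneg j (by omega) (by omega))
            (fun j hj => by
              rw [Finset.mem_Ioc] at hj
              refine key_half j (by omega) (by omega) ?_
              have hjm : (j:ℝ) ≤ (m:ℝ) := Nat.cast_le.mpr hj.2
              linarith)
          rw [Finset.prod_const, Nat.card_Ioc, Nat.sub_zero] at hpp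
          exact hpp
        have hp2 : ∏ j ∈ Finset.Ioc m k, Q j ≤ (2*N)^d := by
          have h1 : ∏ j ∈ Finset.Ioc m k, Q j ≤ (2*N)^(k-m) := by
            have hpp := Finset.prod_le_prod (f := Q) (g := fun _ => 2*N)
              (s := Finset.Ioc m k)
              (fun j hj => by
                rw [Finset.mem_Ioc] at hj
                exact hq_nonneg j (by omega) (by omega))
              (fun j hj => by
                rw [Finset.mem_Ioc] at hj
                exact key_2N j (by omega) (by omega))
            rw [Finset.prod_const, Nat.card_Ioc] at hpp
            exact hpp
          have h2 : (2*N)^(k-m) ≤ (2*N)^d := by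
            apply pow_le_pow_right₀ (by linarith only [hN8])
            omega
          linarith only [h1, h2]
        have hp2nn : (0:ℝ) ≤ ∏ j ∈ Finset.Ioc m k, Q j :=
          Finset.prod_nonneg (fun j hj => by
            rw [Finset.mem_Ioc] at hj
            exact hq_nonneg j (by omega) (by omega))
        exact mul_le_mul hp1 hp2 hp2nn (by positivity)
      calc ∑ k ∈ Finset.Ioc m (n-1), ∏ j ∈ Finset.Icc 1 k, Q j
          ≤ ∑ k ∈ Finset.Ioc m (n-1), ((1/2:ℝ)^m * (2*N)^d) :=
            Finset.sum_le_sum hterm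
        _ = (d:ℝ) * ((1/2:ℝ)^m * (2*N)^d) := by
            rw [Finset.sum_const, Nat.card_Ioc, nsmul_eq_mul, hddef]
        _ ≤ 1 / N := by
            have hhalfm : ((1:ℝ)/2)^m = 1/2^m := by rw [div_pow, one_pow]
            rw [hhalfm]
            have h2m : (0:ℝ) < 2^m := by positivity
            have hpow : (0:ℝ) ≤ (2*N)^d := by positivity
            have hstep : (d:ℝ) * (1/2^m * (2*N)^d) ≤ N * (1/2^m * (2*N)^d) :=
              mul_le_mul_of_nonneg_right (le_trans hdR hWN) (by positivity)
            have heq2 : N * (1/2^m * (2*N)^d) = N * (2*N)^d / 2^m := by ring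
            have hfinal : N * (2*N)^d / 2^m ≤ 1/N := by
              rw [div_le_div_iff₀ h2m hNpos]
              linarith only [hkey]
            calc (d:ℝ) * (1/2^m * (2*N)^d)
                ≤ N * (1/2^m * (2*N)^d) := hstep
              _ = N * (2*N)^d / 2^m := heq2
              _ ≤ 1/N := hfinal
    · have hm'eq : m' = n - 1 := min_eq_right (by omega)
      rw [hm'eq]
      rw [Finset.Ioc_self, Finset.sum_empty]
      positivity
  -- assemble
  have hS1 : 0 ≤ ∑ k ∈ Finset.Ioc 0 m', ∏ j ∈ Finset.Icc 1 k, Q j :=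
    Finset.sum_nonneg (fun k hk => by
      rw [Finset.mem_Ioc] at hk
      exact Finset.prod_nonneg (fun j hj => by
        rw [Finset.mem_Icc] at hj
        exact hq_nonneg j hj.1 (by omega)))
  have hS2 : 0 ≤ ∑ k ∈ Finset.Ioc m' (n-1), ∏ j ∈ Finset.Icc 1 k, Q j :=
    Finset.sum_nonneg (fun k hk => by
      rw [Finset.mem_Ioc] at hk
      exact Finset.prod_nonneg (fun j hj => by
        rw [Finset.mem_Icc] at hj
        exact hq_nonneg j hj.1 (by omega)))
  have hcomb : 4 * C₁ / N + 1 / N ≤ (8 * C₁ + 1) / N := by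
    rw [← add_div]
    exact (div_le_div_iff_of_pos_right hNpos).mpr (by linarith)
  have hle : (∑ k ∈ Finset.Ioc 0 m', ∏ j ∈ Finset.Icc 1 k, Q j) +
      (∑ k ∈ Finset.Ioc m' (n-1), ∏ j ∈ Finset.Icc 1 k, Q j) ≤ (8 * C₁ + 1) / N := by
    linarith only [part1, part2, hcomb]
  have hpos1 : 0 < 1 + ((∑ k ∈ Finset.Ioc 0 m', ∏ j ∈ Finset.Icc 1 k, Q j) +
      (∑ k ∈ Finset.Ioc m' (n-1), ∏ j ∈ Finset.Icc 1 k, Q j)) := by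
    linarith only [hS1, hS2]
  rw [ge_iff_le, le_div_iff₀ hpos1]
  have hcnn : (0:ℝ) ≤ (8 * C₁ + 1) / N := by positivity
  linarith only [hle, hS1, hS2, mul_nonneg hcnn (add_nonneg hS1 hS2)]
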